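/- Let D(x) = e^{−x²} ∫₀ˣ e^{t²} dt be the Dawson function and for σ > 0 define Γ(ω) = √(2π) σ e^{−x²} / (2D(x)² + (π/2)e^{−2x²}) with x = ω/(√2 σ). Then Γ(0) = (2√(2π)/π)σ, and as x → ∞, 2x² e^{−x²} · √(2π)σ / Γ(ω) → 1 (i.e., Γ(ω) ~ 2√(2π) σ x² e^{−x²}). -/

import Mathlib

open Real MeasureTheory Filter Topology intervalIntegral

/-- With the Dawson function `D(x) = e^{−x²} ∫₀ˣ e^{t²} dt` and, for `σ > 0`,
`Γ(ω) = √(2π) σ e^{−x²} / (2D(x)² + (π/2)e^{−2x²})` where `x = ω/(√2 σ)`,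
one has `Γ(0) = (2√(2π)/π)σ`, and as `x → ∞`,
`2x² e^{−x²} √(2π) σ / Γ(ω) → 1` (i.e. `Γ(ω) ~ 2√(2π) σ x² e^{−x²}`). -/

noncomputable def Fg (y : ℝ) : ℝ := ∫ t in (0:ℝ)..y, Real.exp (t^2)

lemma contg : Continuous (fun t : ℝ => Real.exp (t^2)) := Real.continuous_exp.comp (continuous_pow 2)

lemma ig (a b : ℝ) : IntervalIntegrable (fun t : ℝ => Real.exp (t^2)) volume a b :=
  contg.intervalIntegrable a b

lemma exp_int (c a b : ℝ) (hc : c ≠ 0) :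
    ∫ t in a..b, Real.exp (c * t) = (Real.exp (c * b) - Real.exp (c * a)) / c := by
  rw [intervalIntegral.integral_comp_mul_left Real.exp hc, integral_exp]
  rw [smul_eq_mul]; ring

lemma lower_bound {y : ℝ} (hy : 0 < y) :
    (Real.exp (y^2) - Real.exp (-y^2)) / (2*y) ≤ Fg y := by
  have h : ∫ t in (0:ℝ)..y, Real.exp (-y^2) * Real.exp (2*y*t) ≤ Fg y := by
    apply intervalIntegral.integral_mono_on hy.le
      ((by fun_prop : Continuous fun t : ℝ => Real.exp (-y^2) * Real.exp (2*y*t)).intervalIntegrable 0 y)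
      (ig 0 y)
    intro t ht
    rw [← Real.exp_add, Real.exp_le_exp]
    nlinarith [sq_nonneg (t - y)]
  calc (Real.exp (y^2) - Real.exp (-y^2)) / (2*y)
      = ∫ t in (0:ℝ)..y, Real.exp (-y^2) * Real.exp (2*y*t) := by
        rw [intervalIntegral.integral_const_mul, exp_int (2*y) 0 y (by positivity)]
        rw [mul_zero, Real.exp_zero, ← mul_div_assoc]
        have key : Real.exp (-y^2) * Real.exp (2*y*y) = Real.exp (y^2) := by
          rw [← Real.exp_add]; ring_nf
        rw [div_eq_div_iff (by positivity) (by positivity)]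
        nlinarith [key]
    _ ≤ Fg y := h

lemma upper_bound {y : ℝ} (hy : 1 ≤ y) :
    Fg y ≤ (y-1) * Real.exp ((y-1)^2) + (Real.exp (y^2) - Real.exp ((y-1)^2)) / (2*y-1) := by
  have hsplit : Fg y = (∫ t in (0:ℝ)..(y-1), Real.exp (t^2)) + ∫ t in (y-1)..y, Real.exp (t^2) := by
    rw [Fg, ← intervalIntegral.integral_add_adjacent_intervals (ig 0 (y-1)) (ig (y-1) y)]
  have h1 : (∫ t in (0:ℝ)..(y-1), Real.exp (t^2)) ≤ (y-1) * Real.exp ((y-1)^2) := by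
    have := intervalIntegral.integral_mono_on (by linarith : (0:ℝ) ≤ y-1) (ig 0 (y-1))
      (_root_.intervalIntegrable_const (c := Real.exp ((y-1)^2)))
      (fun t ht => by
        rw [Real.exp_le_exp]
        rcases ht with ⟨h0, h1⟩
        nlinarith)
    simpa using this
  have h2 : (∫ t in (y-1)..y, Real.exp (t^2))
      ≤ (Real.exp (y^2) - Real.exp ((y-1)^2)) / (2*y-1) := by
    have hmono : (∫ t in (y-1)..y, Real.exp (t^2))
        ≤ ∫ t in (y-1)..y, Real.exp ((y-1)^2 - (2*y-1)*(y-1)) * Real.exp ((2*y-1)*t) := by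
      apply intervalIntegral.integral_mono_on (by linarith) (ig (y-1) y)
        ((by fun_prop : Continuous fun t : ℝ =>
          Real.exp ((y-1)^2 - (2*y-1)*(y-1)) * Real.exp ((2*y-1)*t)).intervalIntegrable _ _)
      intro t ht
      rw [← Real.exp_add, Real.exp_le_exp]
      rcases ht with ⟨ha, hb⟩
      nlinarith
    have hcomp : (∫ t in (y-1)..y, Real.exp ((y-1)^2 - (2*y-1)*(y-1)) * Real.exp ((2*y-1)*t))
        = (Real.exp (y^2) - Real.exp ((y-1)^2)) / (2*y-1) := by
      rw [intervalIntegral.integral_const_mul, exp_int (2*y-1) (y-1) y (by nlinarith)]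
      rw [← mul_div_assoc]
      congr 1
      have k1 : Real.exp ((y-1)^2 - (2*y-1)*(y-1)) * Real.exp ((2*y-1)*y) = Real.exp (y^2) := by
        rw [← Real.exp_add]; ring_nf
      have k2 : Real.exp ((y-1)^2 - (2*y-1)*(y-1)) * Real.exp ((2*y-1)*(y-1))
          = Real.exp ((y-1)^2) := by
        rw [← Real.exp_add]; ring_nf
      nlinarith [k1, k2]
    linarith [hmono.trans_eq hcomp]
  linarith [hsplit, h1, h2]

lemma h2y : Tendsto (fun y : ℝ => 2*y) atTop atTop :=
  Tendsto.const_mul_atTop two_pos tendsto_id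

lemma h2sq : Tendsto (fun y : ℝ => 2*y^2) atTop atTop :=
  Tendsto.const_mul_atTop two_pos (tendsto_pow_atTop (by norm_num))

lemma exp_neg2sq : Tendsto (fun y : ℝ => Real.exp (-2*y^2)) atTop (𝓝 0) := by
  have := Real.tendsto_exp_atBot.comp (tendsto_neg_atBot_iff.mpr h2sq)
  refine this.congr fun y => ?_
  simp [Function.comp, neg_mul]

lemma lower_lim : Tendsto (fun y : ℝ => (1 - Real.exp (-2*y^2))/2) atTop (𝓝 (1/2)) := by
  have := (tendsto_const_nhds (x := (1:ℝ)).sub exp_neg2sq).div_const 2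
  simpa using this

lemma term1_lim : Tendsto (fun y : ℝ => y*(y-1)*Real.exp (1-2*y)) atTop (𝓝 0) := by
  have hA := (Real.tendsto_pow_mul_exp_neg_atTop_nhds_zero 2).comp h2y
  have hB := (Real.tendsto_pow_mul_exp_neg_atTop_nhds_zero 1).comp h2y
  have : Tendsto (fun y : ℝ => Real.exp 1 * ((2*y)^2*Real.exp (-(2*y))/4 - (2*y)^1*Real.exp (-(2*y))/2))
      atTop (𝓝 (Real.exp 1 * (0/4 - 0/2))) :=
    Tendsto.const_mul _ ((hA.div_const 4).sub (hB.div_const 2))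
  simp only [zero_div, sub_zero, mul_zero] at this
  refine this.congr fun y => ?_
  have : Real.exp 1 * Real.exp (-(2*y)) = Real.exp (1-2*y) := by
    rw [← Real.exp_add]; ring_nf
  linear_combination (y*(y-1)) * this

lemma term2_lim : Tendsto (fun y : ℝ => y/(2*y-1)) atTop (𝓝 (1/2)) := by
  have h0 : Tendsto (fun y : ℝ => 2 - y⁻¹) atTop (𝓝 (2 - 0)) :=
    tendsto_const_nhds.sub tendsto_inv_atTop_zero
  rw [sub_zero] at h0
  have h : Tendsto (fun y : ℝ => (2 - y⁻¹)⁻¹) atTop (𝓝 (2⁻¹)) := h0.inv₀ (by norm_num)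
  have h2 : Tendsto (fun y : ℝ => (2 - y⁻¹)⁻¹) atTop (𝓝 (1/2)) := by
    rwa [show ((2:ℝ)⁻¹) = 1/2 by norm_num] at h
  apply h2.congr'
  filter_upwards [eventually_ge_atTop (1:ℝ)] with y hy
  have hy0 : y ≠ 0 := by linarith
  have : 2 - y⁻¹ = (2*y-1)/y := by field_simp
  rw [this, inv_div]

lemma exp_lin_lim : Tendsto (fun y : ℝ => Real.exp (1-2*y)) atTop (𝓝 0) := by
  have h : Tendsto (fun y : ℝ => 1 + -(2*y)) atTop atBot :=
    tendsto_atBot_add_const_left _ 1 (tendsto_neg_atBot_iff.mpr h2y)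
  exact Real.tendsto_exp_atBot.comp (h.congr fun y => by ring)

lemma upper_lim : Tendsto (fun y : ℝ =>
    y*(y-1)*Real.exp (1-2*y) + (y/(2*y-1))*(1 - Real.exp (1-2*y))) atTop (𝓝 (1/2)) := by
  have := term1_lim.add (term2_lim.mul ((tendsto_const_nhds (x := (1:ℝ))).sub exp_lin_lim))
  norm_num at this
  simpa using this

lemma dawson_lim : Tendsto (fun y : ℝ => y * (Real.exp (-y^2) * Fg y)) atTop (𝓝 (1/2)) := by
  apply tendsto_of_tendsto_of_tendsto_of_le_of_le' lower_lim upper_lim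
  · filter_upwards [eventually_gt_atTop (0:ℝ)] with y hy
    have hpos : (0:ℝ) < y * Real.exp (-y^2) := by positivity
    have h := mul_le_mul_of_nonneg_left (lower_bound hy) hpos.le
    have key : y*Real.exp (-y^2) * ((Real.exp (y^2) - Real.exp (-y^2))/(2*y))
        = (1 - Real.exp (-2*y^2))/2 := by
      have k1 : Real.exp (-y^2) * Real.exp (y^2) = 1 := by rw [← Real.exp_add]; simp
      have k2 : Real.exp (-y^2) * Real.exp (-y^2) = Real.exp (-2*y^2) := by
        rw [← Real.exp_add]; ring_nf
      have k3 : Real.exp (-(2*y^2)) = Real.exp (-2*y^2) := by ring_nf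
      field_simp
      rw [show -(y^2*2) = -2*y^2 by ring]
      linear_combination k1 - k2
    calc (1 - Real.exp (-2*y^2))/2
        = y*Real.exp (-y^2) * ((Real.exp (y^2) - Real.exp (-y^2))/(2*y)) := key.symm
      _ ≤ y*Real.exp (-y^2) * Fg y := h
      _ = y * (Real.exp (-y^2) * Fg y) := by ring
  · filter_upwards [eventually_ge_atTop (1:ℝ)] with y hy
    have hpos : (0:ℝ) ≤ y * Real.exp (-y^2) := by positivity
    have h := mul_le_mul_of_nonneg_left (upper_bound hy) hpos
    have hne : (2*y-1) ≠ 0 := by nlinarith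
    have key : y*Real.exp (-y^2) * ((y-1) * Real.exp ((y-1)^2)
          + (Real.exp (y^2) - Real.exp ((y-1)^2)) / (2*y-1))
        = y*(y-1)*Real.exp (1-2*y) + (y/(2*y-1))*(1 - Real.exp (1-2*y)) := by
      have k1 : Real.exp (-y^2) * Real.exp (y^2) = 1 := by rw [← Real.exp_add]; simp
      have k2 : Real.exp (-y^2) * Real.exp ((y-1)^2) = Real.exp (1-2*y) := by
        rw [← Real.exp_add]; ring_nf
      field_simp
      rw [show y*2-1 = 2*y-1 by ring, show (1:ℝ) - y*2 = 1-2*y by ring]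
      linear_combination (y-1)*k2 + (k1 - k2)/(2*y-1)
    calc y * (Real.exp (-y^2) * Fg y) = y*Real.exp (-y^2) * Fg y := by ring
      _ ≤ y*Real.exp (-y^2) * ((y-1) * Real.exp ((y-1)^2)
          + (Real.exp (y^2) - Real.exp ((y-1)^2)) / (2*y-1)) := h
      _ = _ := key

lemma comp_lim : Tendsto (fun y : ℝ =>
    4*y^2*(Real.exp (-y^2) * Fg y)^2 + π*y^2*Real.exp (-2*y^2)) atTop (𝓝 1) := by
  have h1 : Tendsto (fun y : ℝ => 4*((y * (Real.exp (-y^2) * Fg y)) * (y * (Real.exp (-y^2) * Fg y))))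
      atTop (𝓝 (4*((1/2)*(1/2)))) := (dawson_lim.mul dawson_lim).const_mul 4
  have h2 : Tendsto (fun y : ℝ => (π/2)*((2*y^2)^1*Real.exp (-(2*y^2)))) atTop (𝓝 ((π/2)*0)) :=
    ((Real.tendsto_pow_mul_exp_neg_atTop_nhds_zero 1).comp h2sq).const_mul (π/2)
  have h3 := h1.add h2
  norm_num at h3
  refine h3.congr fun y => ?_
  rw [show -(2*y^2) = -2*y^2 by ring]
  ring

theorem gaussian_dark_waveguide_rate (σ : ℝ) (hσ : 0 < σ)
    (D : ℝ → ℝ) (hD : ∀ x, D x = Real.exp (-x ^ 2) * ∫ t in (0 : ℝ)..x, Real.exp (t ^ 2))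
    (x : ℝ → ℝ) (hx : ∀ ω, x ω = ω / (Real.sqrt 2 * σ))
    (Γ : ℝ → ℝ)
    (hΓ : ∀ ω, Γ ω = Real.sqrt (2 * π) * σ * Real.exp (-(x ω) ^ 2) /
      (2 * (D (x ω)) ^ 2 + (π / 2) * Real.exp (-2 * (x ω) ^ 2))) :
    Γ 0 = (2 * Real.sqrt (2 * π) / π) * σ ∧
    Tendsto
      (fun ω : ℝ =>
        2 * (x ω) ^ 2 * Real.exp (-(x ω) ^ 2) * Real.sqrt (2 * π) * σ / Γ ω)
      atTop (𝓝 1) := by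
  constructor
  · have hx0 : x 0 = 0 := by rw [hx]; simp
    have hD0 : D 0 = 0 := by rw [hD]; simp
    rw [hΓ 0, hx0, hD0]
    norm_num
    field_simp
  · have hxc : Tendsto x atTop atTop := by
      have h : Tendsto (fun ω : ℝ => ω / (Real.sqrt 2 * σ)) atTop atTop :=
        tendsto_id.atTop_div_const (by positivity)
      exact h.congr fun ω => (hx ω).symm
    have hmain := comp_lim.comp hxc
    refine hmain.congr fun ω => ?_
    have hA : (0:ℝ) < Real.sqrt (2 * π) * σ * Real.exp (-(x ω) ^ 2) := by
      have : (0:ℝ) < 2 * π := by positivity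
      positivity
    have hB : (0:ℝ) < 2 * (D (x ω)) ^ 2 + (π / 2) * Real.exp (-2 * (x ω) ^ 2) := by
      have := Real.pi_pos
      positivity
    rw [Function.comp_apply, hΓ ω, div_div_eq_mul_div, eq_div_iff hA.ne']
    rw [hD (x ω)]
    simp only [Fg]
    ring
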